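/- Let G ⊆ ℝⁿ be a measurable set, T > 0, and let F : (0,T) × G → [0,∞) be a measurable function. For 0 < ε < 1/3 set r = 4/3 − ε and ρ = (8 − 6ε)/(2 + 3ε). Then the mixed-norm estimate ‖F‖_{L_{4/3}(0,T; L_r(G))} ≤ ‖F^{1/2}‖_{L_4(0,T; L_2(G))} · ‖F^{1/2}‖_{L_2(0,T; L_ρ(G))} holds; explicitly, ( ∫₀ᵀ ( ∫_G F(t,x)^r dx )^{4/(3r)} dt )^{3/4} ≤ ( ∫₀ᵀ ( ∫_G F(t,x) dx )² dt )^{1/4} · ( ∫₀ᵀ ( ∫_G F(t,x)^{ρ/2} dx )^{2/ρ} dt )^{1/2}, whenever the right-hand side is finite. -/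

import Mathlib

open MeasureTheory

/-- Time-space Hölder-type interpolation: for a nonnegative measurable
`F : (0,T) × G → [0,∞)` and `0 < ε < 1/3`, with `r = 4/3 − ε` and
`ρ = (8 − 6ε)/(2 + 3ε)`, one has
`‖F‖_{L_{4/3}(0,T;L_r)} ≤ ‖F^{1/2}‖_{L_4(0,T;L_2)} ⬝ ‖F^{1/2}‖_{L_2(0,T;L_ρ)}`.
(The inequality is stated in `[0,∞]`, hence holds in particular whenever the
right-hand side is finite.) -/
theorem time_space_holder_interpolation
    (n : ℕ) (G : Set (EuclideanSpace ℝ (Fin n))) (hG : MeasurableSet G)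
    (T : ℝ) (hT : 0 < T)
    (F : ℝ → EuclideanSpace ℝ (Fin n) → ℝ)
    (hF : ∀ t x, 0 ≤ F t x)
    (hFmeas : Measurable (Function.uncurry F))
    (ε : ℝ) (hε0 : 0 < ε) (hε : ε < 1/3)
    (r ρ : ℝ) (hr : r = 4/3 - ε) (hρ : ρ = (8 - 6*ε)/(2 + 3*ε)) :
    (∫⁻ t in Set.Ioo 0 T,
        (∫⁻ x in G, ENNReal.ofReal (F t x) ^ r) ^ (4/(3*r))) ^ ((3:ℝ)/4) ≤
      (∫⁻ t in Set.Ioo 0 T,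
          (∫⁻ x in G, ENNReal.ofReal (F t x)) ^ (2:ℝ)) ^ ((1:ℝ)/4) *
        (∫⁻ t in Set.Ioo 0 T,
            (∫⁻ x in G, ENNReal.ofReal (F t x) ^ (ρ/2)) ^ (2/ρ)) ^ ((1:ℝ)/2) := by
  have hden : (0:ℝ) < 2 + 3*ε := by linarith
  have hr0 : (0:ℝ) < r := by rw [hr]; linarith
  have hρ0 : (0:ℝ) < ρ := by
    rw [hρ]; exact div_pos (by linarith) hden
  -- notation
  set g : ℝ → EuclideanSpace ℝ (Fin n) → ENNReal := fun t x => ENNReal.ofReal (F t x) with hg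
  have hgmeas : Measurable (Function.uncurry g) := hFmeas.ennreal_ofReal
  have hgt : ∀ t, Measurable (g t) := fun t =>
    hgmeas.comp (measurable_prodMk_left)
  set A : ℝ → ENNReal := fun t => ∫⁻ x in G, g t x with hA
  set B : ℝ → ENNReal := fun t => ∫⁻ x in G, g t x ^ (ρ/2) with hB
  have hAmeas : Measurable A := Measurable.lintegral_prod_right hgmeas
  have hBmeas : Measurable B := by
    apply Measurable.lintegral_prod_right (f := fun t x => g t x ^ (ρ/2))
    exact hgmeas.pow_const _
  -- inner Hölder, pointwise in t
  have hhalf : (0:ℝ) ≤ r/2 := by linarith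
  have hconj : Real.HolderConjugate (2/r) (ρ/r) := by
    refine Real.holderConjugate_iff.mpr ⟨?_, ?_⟩
    · rw [hr]; rw [one_lt_div (by linarith)]; linarith
    · rw [hr, hρ]
      have h1 : (4:ℝ)/3 - ε ≠ 0 := by linarith
      have h2 : (2:ℝ) + 3*ε ≠ 0 := by linarith
      have h3 : (8:ℝ) - 6*ε ≠ 0 := by linarith
      rw [inv_div, inv_div, div_div_eq_mul_div, div_add_div _ _ two_ne_zero h3, div_eq_one_iff_eq (mul_ne_zero two_ne_zero h3)]
      ring
  have inner : ∀ t, (∫⁻ x in G, g t x ^ r) ≤ (A t) ^ (r/2) * (B t) ^ (r/ρ) := by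
    intro t
    have key := ENNReal.lintegral_mul_le_Lp_mul_Lq (μ := volume.restrict G)
      (f := fun x => g t x ^ (r/2)) (g := fun x => g t x ^ (r/2)) hconj
      ((hgt t).pow_const (r/2)).aemeasurable ((hgt t).pow_const (r/2)).aemeasurable
    simp only [Pi.mul_apply] at key
    calc (∫⁻ x in G, g t x ^ r)
        = ∫⁻ x in G, g t x ^ (r/2) * g t x ^ (r/2) := by
          refine lintegral_congr fun x => ?_
          rw [← ENNReal.rpow_add_of_nonneg _ _ hhalf hhalf]
          congr 1; ring
      _ ≤ (∫⁻ x in G, (g t x ^ (r/2)) ^ (2/r)) ^ (1/(2/r)) *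
          (∫⁻ x in G, (g t x ^ (r/2)) ^ (ρ/r)) ^ (1/(ρ/r)) := key
      _ = (A t) ^ (r/2) * (B t) ^ (r/ρ) := by
          rw [one_div_div, one_div_div]
          congr 2
          · refine lintegral_congr fun x => ?_
            rw [← ENNReal.rpow_mul]
            rw [show r/2 * (2/r) = 1 by field_simp, ENNReal.rpow_one]
          · refine lintegral_congr fun x => ?_
            rw [← ENNReal.rpow_mul]
            congr 1
            field_simp
  -- raise to power 4/(3r)
  have h43 : (0:ℝ) < 4/(3*r) := by positivity
  have step2 : ∀ t, (∫⁻ x in G, g t x ^ r) ^ (4/(3*r)) ≤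
      (A t) ^ ((2:ℝ)/3) * ((B t) ^ (2/ρ)) ^ ((2:ℝ)/3) := by
    intro t
    calc (∫⁻ x in G, g t x ^ r) ^ (4/(3*r))
        ≤ ((A t) ^ (r/2) * (B t) ^ (r/ρ)) ^ (4/(3*r)) :=
          ENNReal.rpow_le_rpow (inner t) h43.le
      _ = (A t) ^ ((2:ℝ)/3) * ((B t) ^ (2/ρ)) ^ ((2:ℝ)/3) := by
          rw [ENNReal.mul_rpow_of_nonneg _ _ h43.le, ← ENNReal.rpow_mul,
            ← ENNReal.rpow_mul, ← ENNReal.rpow_mul]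
          congr 2
          · field_simp; ring
          · field_simp; ring
  -- time Hölder with exponents 3, 3/2
  have hconj2 : Real.HolderConjugate 3 (3/2) := by refine Real.holderConjugate_iff.mpr ⟨?_, ?_⟩ <;> norm_num
  have step3 : (∫⁻ t in Set.Ioo 0 T, (∫⁻ x in G, g t x ^ r) ^ (4/(3*r))) ≤
      (∫⁻ t in Set.Ioo 0 T, (A t) ^ (2:ℝ)) ^ ((1:ℝ)/3) *
      (∫⁻ t in Set.Ioo 0 T, (B t) ^ (2/ρ)) ^ ((2:ℝ)/3) := by
    calc (∫⁻ t in Set.Ioo 0 T, (∫⁻ x in G, g t x ^ r) ^ (4/(3*r)))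
        ≤ ∫⁻ t in Set.Ioo 0 T,
            (fun t => (A t) ^ ((2:ℝ)/3)) t * (fun t => ((B t) ^ (2/ρ)) ^ ((2:ℝ)/3)) t :=
          lintegral_mono fun t => step2 t
      _ ≤ (∫⁻ t in Set.Ioo 0 T, ((A t) ^ ((2:ℝ)/3)) ^ (3:ℝ)) ^ ((1:ℝ)/3) *
          (∫⁻ t in Set.Ioo 0 T, (((B t) ^ (2/ρ)) ^ ((2:ℝ)/3)) ^ ((3:ℝ)/2)) ^ (1/(3/2:ℝ)) :=
          ENNReal.lintegral_mul_le_Lp_mul_Lq _ hconj2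
            ((hAmeas.pow_const _).aemeasurable)
            (((hBmeas.pow_const _).pow_const _).aemeasurable)
      _ = (∫⁻ t in Set.Ioo 0 T, (A t) ^ (2:ℝ)) ^ ((1:ℝ)/3) *
          (∫⁻ t in Set.Ioo 0 T, (B t) ^ (2/ρ)) ^ ((2:ℝ)/3) := by
          congr 1
          · congr 1; congr 1; ext t
            rw [← ENNReal.rpow_mul]; norm_num
          · congr 1
            · congr 1; ext t
              rw [← ENNReal.rpow_mul]; norm_num
            · norm_num
  -- raise to 3/4 and conclude
  calc (∫⁻ t in Set.Ioo 0 T, (∫⁻ x in G, g t x ^ r) ^ (4/(3*r))) ^ ((3:ℝ)/4)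
      ≤ ((∫⁻ t in Set.Ioo 0 T, (A t) ^ (2:ℝ)) ^ ((1:ℝ)/3) *
         (∫⁻ t in Set.Ioo 0 T, (B t) ^ (2/ρ)) ^ ((2:ℝ)/3)) ^ ((3:ℝ)/4) :=
        ENNReal.rpow_le_rpow step3 (by norm_num)
    _ = (∫⁻ t in Set.Ioo 0 T, (A t) ^ (2:ℝ)) ^ ((1:ℝ)/4) *
        (∫⁻ t in Set.Ioo 0 T, (B t) ^ (2/ρ)) ^ ((1:ℝ)/2) := by
        rw [ENNReal.mul_rpow_of_nonneg _ _ (by norm_num : (0:ℝ) ≤ 3/4),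
          ← ENNReal.rpow_mul, ← ENNReal.rpow_mul]
        norm_num
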